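/- Let p ∈ (0,1) and let F ∈ F_1^+ be a cdf that is continuous and strictly increasing at x_p := F^{-1}(p). Let F_n be the empirical cdf of independent random variables X_1, …, X_n, each with cdf F. Then √n · Γ_p(F, F_n) converges to 0 in probability as n → ∞. -/

import Mathlib

open MeasureTheory ProbabilityTheory Filter Set
open Topology
open scoped ENNReal NNReal

/-- The cumulative distribution function of a probability measure `μ` on `ℝ`. -/
noncomputable def cdfOf (μ : Measure ℝ) : ℝ → ℝ := fun x => (μ (Iic x)).toReal

/-- The quantile function of a cdf `F`: `F⁻¹(p) = inf {x : F x ≥ p}`. -/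
noncomputable def qtl (F : ℝ → ℝ) (p : ℝ) : ℝ := sInf {x | p ≤ F x}

/-- The "gap" functional
`Γ_p(F,G) = ∫_p^1 (F⁻¹(u) − G⁻¹(u)) du − ∫_{F⁻¹(p)}^∞ (G(x) − F(x)) dx`. -/
noncomputable def gapFun (p : ℝ) (F G : ℝ → ℝ) : ℝ :=
  (∫ u in p..1, (qtl F u - qtl G u)) - ∫ x in Ioi (qtl F p), (G x - F x)

/-- The empirical cdf `F_n` built from the first `n` of the random variables `X`,
at the sample point `ω`: `F_n(t) = (1/n) ∑_{i<n} 1{X_i(ω) ≤ t}`. -/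
noncomputable def empCdf {Ω : Type*} (X : ℕ → Ω → ℝ) (n : ℕ) (ω : Ω) : ℝ → ℝ :=
  fun t => (∑ i ∈ Finset.range n, if X i ω ≤ t then (1 : ℝ) else 0) / n


namespace S17

lemma qtl_le_iff {H : ℝ → ℝ} (hmono : Monotone H)
    (hrc : ∀ x, ContinuousWithinAt H (Ici x) x) {u : ℝ}
    (hne : {x | u ≤ H x}.Nonempty) (hbdd : BddBelow {x | u ≤ H x}) (x : ℝ) :
    qtl H u ≤ x ↔ u ≤ H x := by
  constructor
  · intro h
    have key : ∀ y, sInf {x | u ≤ H x} < y → u ≤ H y := by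
      intro y hy
      obtain ⟨s, hs, hsy⟩ := exists_lt_of_csInf_lt hne hy
      exact le_trans hs (hmono hsy.le)
    have hlim : Tendsto H (𝓝[>] (sInf {x | u ≤ H x})) (𝓝 (H (sInf {x | u ≤ H x}))) :=
      (hrc _).tendsto.mono_left (nhdsWithin_mono _ Ioi_subset_Ici_self)
    have hmem : u ≤ H (sInf {x | u ≤ H x}) := by
      refine ge_of_tendsto hlim ?_
      filter_upwards [self_mem_nhdsWithin] with y hy using key y hy
    exact le_trans hmem (hmono h)
  · intro h
    exact csInf_le hbdd h

lemma lt_qtl_iff {H : ℝ → ℝ} (hmono : Monotone H)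
    (hrc : ∀ x, ContinuousWithinAt H (Ici x) x) {u : ℝ}
    (hne : {x | u ≤ H x}.Nonempty) (hbdd : BddBelow {x | u ≤ H x}) (x : ℝ) :
    x < qtl H u ↔ H x < u := by
  rw [← not_le, ← not_le, not_iff_not]
  exact qtl_le_iff hmono hrc hne hbdd x

lemma volume_Ioo_inter_Iic {p t : ℝ} (ht : t ≤ 1) :
    volume (Ioo p 1 ∩ Iic t) = ENNReal.ofReal (max t p - p) := by
  have hmax : ENNReal.ofReal (max t p - p) = ENNReal.ofReal (t - p) := by
    rcases le_total t p with h | h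
    · rw [max_eq_right h, sub_self, ENNReal.ofReal_zero]
      exact (ENNReal.ofReal_eq_zero.2 (by linarith)).symm
    · rw [max_eq_left h]
  rw [hmax]
  rcases lt_or_eq_of_le ht with h | h
  · have : Ioo p 1 ∩ Iic t = Ioc p t := by
      ext u
      simp only [mem_inter_iff, mem_Ioo, mem_Ioc, mem_Iic]
      exact ⟨fun ⟨⟨h1, _⟩, h3⟩ => ⟨h1, h3⟩, fun ⟨h1, h3⟩ => ⟨⟨h1, lt_of_le_of_lt h3 h⟩, h3⟩⟩
    rw [this, Real.volume_Ioc]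
  · subst h
    have : Ioo p 1 ∩ Iic 1 = Ioo p 1 := by
      apply inter_eq_left.2
      exact fun u hu => le_of_lt hu.2
    rw [this, Real.volume_Ioo]

lemma volume_Ioo_inter_Ioi {p t : ℝ} :
    volume (Ioo p 1 ∩ Ioi t) = ENNReal.ofReal (1 - max t p) := by
  have : Ioo p 1 ∩ Ioi t = Ioo (max t p) 1 := by
    ext u
    simp only [mem_inter_iff, mem_Ioo, mem_Ioi, max_lt_iff]
    tauto
  rw [this, Real.volume_Ioo]

lemma quantile_integral {H : ℝ → ℝ} (hmono : Monotone H)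
    (hrc : ∀ x, ContinuousWithinAt H (Ici x) x) (hH1 : ∀ x, H x ≤ 1)
    {p : ℝ} (c : ℝ) (hp1 : p < 1)
    (hne : ∀ u ∈ Ioo p 1, {x | u ≤ H x}.Nonempty)
    (hbdd : ∀ u ∈ Ioo p 1, BddBelow {x | u ≤ H x})
    (hA : ∫⁻ x in Ici c, ENNReal.ofReal (1 - max (H x) p) ≠ ⊤)
    (hB : ∫⁻ x in Iio c, ENNReal.ofReal (max (H x) p - p) ≠ ⊤) :
    IntegrableOn (qtl H) (Ioc p 1) volume ∧
      ∫ u in Ioc p 1, qtl H u =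
        (1 - p) * c + (∫⁻ x in Ici c, ENNReal.ofReal (1 - max (H x) p)).toReal
          - (∫⁻ x in Iio c, ENNReal.ofReal (max (H x) p - p)).toReal := by
  have hHm : Measurable H := hmono.measurable
  set Apos : Set (ℝ × ℝ) := {z : ℝ × ℝ | z.1 ∈ Ioo p 1 ∧ c ≤ z.2 ∧ H z.2 < z.1} with hAposdef
  set Aneg : Set (ℝ × ℝ) := {z : ℝ × ℝ | z.1 ∈ Ioo p 1 ∧ z.2 < c ∧ z.1 ≤ H z.2} with hAnegdef
  have hApos : MeasurableSet Apos := by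
    have h1 : MeasurableSet {z : ℝ × ℝ | z.1 ∈ Ioo p 1} := measurable_fst measurableSet_Ioo
    have h2 : MeasurableSet {z : ℝ × ℝ | c ≤ z.2} := measurable_snd measurableSet_Ici
    have h3 : MeasurableSet {z : ℝ × ℝ | H z.2 < z.1} :=
      measurableSet_lt (hHm.comp measurable_snd) measurable_fst
    exact h1.inter (h2.inter h3)
  have hAneg : MeasurableSet Aneg := by
    have h1 : MeasurableSet {z : ℝ × ℝ | z.1 ∈ Ioo p 1} := measurable_fst measurableSet_Ioo
    have h2 : MeasurableSet {z : ℝ × ℝ | z.2 < c} := measurable_snd measurableSet_Iio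
    have h3 : MeasurableSet {z : ℝ × ℝ | z.1 ≤ H z.2} :=
      measurableSet_le measurable_fst (hHm.comp measurable_snd)
    exact h1.inter (h2.inter h3)
  have key : ∀ u ∈ Ioo p 1, ∀ x : ℝ, (x < qtl H u ↔ H x < u) := fun u hu x =>
    lt_qtl_iff hmono hrc (hne u hu) (hbdd u hu) x
  have key' : ∀ u ∈ Ioo p 1, ∀ x : ℝ, (qtl H u ≤ x ↔ u ≤ H x) := fun u hu x =>
    qtl_le_iff hmono hrc (hne u hu) (hbdd u hu) x
  -- positive part, two evaluations
  have hpos1 : (volume.prod volume) Apos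
      = ∫⁻ u in Ioo p 1, ENNReal.ofReal (qtl H u - c) := by
    rw [Measure.prod_apply hApos, ← lintegral_indicator measurableSet_Ioo]
    apply lintegral_congr
    intro u
    by_cases hu : u ∈ Ioo p 1
    · have hset : Prod.mk u ⁻¹' Apos = Ico c (qtl H u) := by
        ext x
        simp only [mem_preimage, hAposdef, mem_setOf_eq, mem_Ico]
        constructor
        · rintro ⟨_, hcx, hHx⟩; exact ⟨hcx, (key u hu x).2 hHx⟩
        · rintro ⟨hcx, hx⟩; exact ⟨hu, hcx, (key u hu x).1 hx⟩
      rw [hset, Real.volume_Ico, indicator_of_mem hu]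
    · have hset : Prod.mk u ⁻¹' Apos = ∅ := by
        ext x
        simp only [mem_preimage, hAposdef, mem_setOf_eq, mem_empty_iff_false, iff_false]
        rintro ⟨h1, -, -⟩; exact hu h1
      rw [hset, measure_empty, indicator_of_notMem hu]
  have hpos2 : (volume.prod volume) Apos
      = ∫⁻ x in Ici c, ENNReal.ofReal (1 - max (H x) p) := by
    rw [Measure.prod_apply_symm hApos, ← lintegral_indicator measurableSet_Ici]
    apply lintegral_congr
    intro x
    by_cases hx : x ∈ Ici c
    · have hset : (fun u => (u, x)) ⁻¹' Apos = Ioo p 1 ∩ Ioi (H x) := by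
        ext u
        simp only [mem_preimage, hAposdef, mem_setOf_eq, mem_inter_iff, mem_Ioi]
        constructor
        · rintro ⟨h1, -, h3⟩; exact ⟨h1, h3⟩
        · rintro ⟨h1, h3⟩; exact ⟨h1, hx, h3⟩
      rw [hset, volume_Ioo_inter_Ioi, indicator_of_mem hx]
    · have hset : (fun u => (u, x)) ⁻¹' Apos = ∅ := by
        ext u
        simp only [mem_preimage, hAposdef, mem_setOf_eq, mem_empty_iff_false, iff_false]
        rintro ⟨-, h2, -⟩; exact hx h2
      rw [hset, measure_empty, indicator_of_notMem hx]
  -- negative part, two evaluations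
  have hneg1 : (volume.prod volume) Aneg
      = ∫⁻ u in Ioo p 1, ENNReal.ofReal (c - qtl H u) := by
    rw [Measure.prod_apply hAneg, ← lintegral_indicator measurableSet_Ioo]
    apply lintegral_congr
    intro u
    by_cases hu : u ∈ Ioo p 1
    · have hset : Prod.mk u ⁻¹' Aneg = Ico (qtl H u) c := by
        ext x
        simp only [mem_preimage, hAnegdef, mem_setOf_eq, mem_Ico]
        constructor
        · rintro ⟨_, hxc, hHx⟩; exact ⟨(key' u hu x).2 hHx, hxc⟩
        · rintro ⟨hx, hxc⟩; exact ⟨hu, hxc, (key' u hu x).1 hx⟩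
      rw [hset, Real.volume_Ico, indicator_of_mem hu]
    · have hset : Prod.mk u ⁻¹' Aneg = ∅ := by
        ext x
        simp only [mem_preimage, hAnegdef, mem_setOf_eq, mem_empty_iff_false, iff_false]
        rintro ⟨h1, -, -⟩; exact hu h1
      rw [hset, measure_empty, indicator_of_notMem hu]
  have hneg2 : (volume.prod volume) Aneg
      = ∫⁻ x in Iio c, ENNReal.ofReal (max (H x) p - p) := by
    rw [Measure.prod_apply_symm hAneg, ← lintegral_indicator measurableSet_Iio]
    apply lintegral_congr
    intro x
    by_cases hx : x ∈ Iio c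
    · have hset : (fun u => (u, x)) ⁻¹' Aneg = Ioo p 1 ∩ Iic (H x) := by
        ext u
        simp only [mem_preimage, hAnegdef, mem_setOf_eq, mem_inter_iff, mem_Iic]
        constructor
        · rintro ⟨h1, -, h3⟩; exact ⟨h1, h3⟩
        · rintro ⟨h1, h3⟩; exact ⟨h1, hx, h3⟩
      rw [hset, volume_Ioo_inter_Iic (hH1 x), indicator_of_mem hx]
    · have hset : (fun u => (u, x)) ⁻¹' Aneg = ∅ := by
        ext u
        simp only [mem_preimage, hAnegdef, mem_setOf_eq, mem_empty_iff_false, iff_false]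
        rintro ⟨-, h2, -⟩; exact hx h2
      rw [hset, measure_empty, indicator_of_notMem hx]
  have hposfin : ∫⁻ u in Ioo p 1, ENNReal.ofReal (qtl H u - c) ≠ ⊤ := by
    rw [← hpos1, hpos2]; exact hA
  have hnegfin : ∫⁻ u in Ioo p 1, ENNReal.ofReal (c - qtl H u) ≠ ⊤ := by
    rw [← hneg1, hneg2]; exact hB
  -- measurability of qtl H on Ioo p 1
  have hqmono : MonotoneOn (qtl H) (Ioo p 1) := by
    intro u hu v hv huv
    exact csInf_le_csInf (hbdd u hu) (hne v hv) (fun x hx => le_trans huv hx)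
  have hqmeas : AEMeasurable (qtl H) (volume.restrict (Ioo p 1)) :=
    aemeasurable_restrict_of_monotoneOn measurableSet_Ioo hqmono
  -- integrability of qtl H - c on Ioo p 1
  have habs : ∀ u : ℝ, ENNReal.ofReal ‖qtl H u - c‖
      = ENNReal.ofReal (qtl H u - c) + ENNReal.ofReal (c - qtl H u) := by
    intro u
    rcases le_total (qtl H u) c with h | h
    · have h1 : ENNReal.ofReal (qtl H u - c) = 0 := ENNReal.ofReal_eq_zero.2 (by linarith)
      rw [h1, zero_add, Real.norm_eq_abs, abs_of_nonpos (by linarith)]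
      congr 1; ring
    · have h1 : ENNReal.ofReal (c - qtl H u) = 0 := ENNReal.ofReal_eq_zero.2 (by linarith)
      rw [h1, add_zero, Real.norm_eq_abs, abs_of_nonneg (by linarith)]
  have hint : IntegrableOn (fun u => qtl H u - c) (Ioo p 1) volume := by
    constructor
    · exact (hqmeas.sub aemeasurable_const).aestronglyMeasurable
    · rw [hasFiniteIntegral_iff_norm]
      calc ∫⁻ u in Ioo p 1, ENNReal.ofReal ‖qtl H u - c‖
          = ∫⁻ u in Ioo p 1, (ENNReal.ofReal (qtl H u - c) + ENNReal.ofReal (c - qtl H u)) := by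
            apply lintegral_congr; intro u; exact habs u
        _ = (∫⁻ u in Ioo p 1, ENNReal.ofReal (qtl H u - c))
            + ∫⁻ u in Ioo p 1, ENNReal.ofReal (c - qtl H u) := by
            apply lintegral_add_left'
            exact (hqmeas.sub aemeasurable_const).ennreal_ofReal
        _ < ⊤ := by
            exact ENNReal.add_lt_top.2 ⟨hposfin.lt_top, hnegfin.lt_top⟩
  have hintq : IntegrableOn (qtl H) (Ioo p 1) volume := by
    have hconst : IntegrableOn (fun _ : ℝ => c) (Ioo p 1) volume :=
      integrableOn_const (by rw [Real.volume_Ioo]; exact ENNReal.ofReal_ne_top)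
    have h2 := hint.add hconst
    exact h2.congr (ae_of_all _ fun u => by simp [Pi.add_apply])
  have hval : ∫ u in Ioo p 1, (qtl H u - c)
      = (∫⁻ x in Ici c, ENNReal.ofReal (1 - max (H x) p)).toReal
        - (∫⁻ x in Iio c, ENNReal.ofReal (max (H x) p - p)).toReal := by
    rw [integral_eq_lintegral_pos_part_sub_lintegral_neg_part hint]
    congr 1
    · rw [← hpos2, hpos1]
    · rw [← hneg2, hneg1]
      congr 1
      apply lintegral_congr; intro u; congr 1; ring
  have hvol : volume (Ioo p 1) = ENNReal.ofReal (1 - p) := Real.volume_Ioo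
  have hfinal : ∫ u in Ioo p 1, qtl H u
      = (1 - p) * c + (∫⁻ x in Ici c, ENNReal.ofReal (1 - max (H x) p)).toReal
        - (∫⁻ x in Iio c, ENNReal.ofReal (max (H x) p - p)).toReal := by
    have hsplit : ∫ u in Ioo p 1, qtl H u
        = (∫ u in Ioo p 1, (qtl H u - c)) + ∫ u in Ioo p 1, (c : ℝ) := by
      have hconst : IntegrableOn (fun _ : ℝ => c) (Ioo p 1) volume :=
        integrableOn_const (by rw [Real.volume_Ioo]; exact ENNReal.ofReal_ne_top)
      rw [← integral_add hint hconst]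
      apply integral_congr_ae; filter_upwards with u; ring
    rw [hsplit, hval, integral_const]
    simp only [measureReal_def, Measure.restrict_apply_univ]
    rw [hvol, ENNReal.toReal_ofReal (by linarith), smul_eq_mul]
    ring
  constructor
  · exact (integrableOn_Ioc_iff_integrableOn_Ioo).2 hintq
  · rw [integral_Ioc_eq_integral_Ioo]
    exact hfinal

lemma gap_bound {F G : ℝ → ℝ} {p : ℝ} (hp0 : 0 < p) (hp1 : p < 1)
    (hFmono : Monotone F) (hFrc : ∀ x, ContinuousWithinAt F (Ici x) x) (hF1 : ∀ x, F x ≤ 1)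
    (hFne : ∀ u ∈ Ioo p 1, {x | u ≤ F x}.Nonempty)
    (hFbdd : ∀ u ∈ Ioo p 1, BddBelow {x | u ≤ F x})
    (hFc : F (qtl F p) = p)
    (hFlt : ∀ x, x < qtl F p → F x < p)
    (hAF : ∫⁻ x in Ici (qtl F p), ENNReal.ofReal (1 - F x) ≠ ⊤)
    (hGmono : Monotone G) (hGrc : ∀ x, ContinuousWithinAt G (Ici x) x)
    (hG0 : ∀ x, 0 ≤ G x) (hG1 : ∀ x, G x ≤ 1)
    (a b : ℝ) (hGa : ∀ x, x < a → G x = 0) (hGb : ∀ x, b ≤ x → G x = 1) :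
    0 ≤ gapFun p F G ∧
      gapFun p F G ≤ |qtl G p - qtl F p| * |G (qtl F p) - p| := by
  set c := qtl F p with hc
  have hGne : ∀ u ∈ Ioo p 1, {x | u ≤ G x}.Nonempty := by
    intro u hu
    exact ⟨b, by simp only [mem_setOf_eq, hGb b le_rfl]; exact hu.2.le⟩
  have hGbdd' : ∀ u : ℝ, 0 < u → BddBelow {x | u ≤ G x} := by
    intro u hu
    refine ⟨a, fun x hx => ?_⟩
    by_contra hax
    push_neg at hax
    have := hGa x hax
    rw [mem_setOf_eq, this] at hx
    linarith
  have hGbdd : ∀ u ∈ Ioo p 1, BddBelow {x | u ≤ G x} := fun u hu => hGbdd' u (lt_trans hp0 hu.1)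
  have hGnep : {x | p ≤ G x}.Nonempty := ⟨b, by simp only [mem_setOf_eq, hGb b le_rfl]; linarith⟩
  have hGgal : ∀ x : ℝ, qtl G p ≤ x ↔ p ≤ G x :=
    qtl_le_iff hGmono hGrc hGnep (hGbdd' p hp0)
  -- finiteness of the lintegrals for G
  have hbound1 : ∀ x : ℝ, ENNReal.ofReal (1 - max (G x) p) ≤ (Iio b).indicator 1 x := by
    intro x
    by_cases hx : x ∈ Iio b
    · rw [indicator_of_mem hx]
      simp only [Pi.one_apply]
      exact ENNReal.ofReal_le_one.2 (by have := hG0 x; have := le_max_right (G x) p; linarith)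
    · rw [indicator_of_notMem hx]
      have hb : b ≤ x := not_lt.1 hx
      rw [hGb x hb, max_eq_left hp1.le, sub_self, ENNReal.ofReal_zero]
  have hbound2 : ∀ x : ℝ, ENNReal.ofReal (max (G x) p - p) ≤ (Ici a).indicator 1 x := by
    intro x
    by_cases hx : x ∈ Ici a
    · rw [indicator_of_mem hx]
      simp only [Pi.one_apply]
      exact ENNReal.ofReal_le_one.2 (by have := hG1 x; have h2 : max (G x) p ≤ 1 := max_le (hG1 x) hp1.le; linarith)
    · rw [indicator_of_notMem hx]
      have ha : x < a := not_le.1 (by simpa [mem_Ici] using hx)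
      rw [hGa x ha, max_eq_right hp0.le, sub_self, ENNReal.ofReal_zero]
  have hAG : ∫⁻ x in Ici c, ENNReal.ofReal (1 - max (G x) p) ≠ ⊤ := by
    refine ne_top_of_le_ne_top ?_ (lintegral_mono hbound1)
    rw [lintegral_indicator_one measurableSet_Iio, Measure.restrict_apply measurableSet_Iio]
    have hsub : Iio b ∩ Ici c ⊆ Ico c b := fun x hx => ⟨hx.2, hx.1⟩
    exact ((measure_mono hsub).trans_lt (by rw [Real.volume_Ico]; exact ENNReal.ofReal_lt_top)).ne
  have hTG : ∫⁻ x in Ici c, ENNReal.ofReal (1 - G x) ≠ ⊤ := by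
    have hb1 : ∀ x : ℝ, ENNReal.ofReal (1 - G x) ≤ (Iio b).indicator 1 x := by
      intro x
      by_cases hx : x ∈ Iio b
      · rw [indicator_of_mem hx]
        exact ENNReal.ofReal_le_one.2 (by have := hG0 x; linarith)
      · rw [indicator_of_notMem hx, hGb x (not_lt.1 hx), sub_self, ENNReal.ofReal_zero]
    refine ne_top_of_le_ne_top ?_ (lintegral_mono hb1)
    rw [lintegral_indicator_one measurableSet_Iio, Measure.restrict_apply measurableSet_Iio]
    have hsub : Iio b ∩ Ici c ⊆ Ico c b := fun x hx => ⟨hx.2, hx.1⟩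
    exact ((measure_mono hsub).trans_lt (by rw [Real.volume_Ico]; exact ENNReal.ofReal_lt_top)).ne
  have hBG : ∫⁻ x in Iio c, ENNReal.ofReal (max (G x) p - p) ≠ ⊤ := by
    refine ne_top_of_le_ne_top ?_ (lintegral_mono hbound2)
    rw [lintegral_indicator_one measurableSet_Ici, Measure.restrict_apply measurableSet_Ici]
    have hsub : Ici a ∩ Iio c ⊆ Ico a c := fun x hx => ⟨hx.1, hx.2⟩
    exact ((measure_mono hsub).trans_lt (by rw [Real.volume_Ico]; exact ENNReal.ofReal_lt_top)).ne
  -- F-side lintegral simplifications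
  have hFA' : ∫⁻ x in Ici c, ENNReal.ofReal (1 - max (F x) p)
      = ∫⁻ x in Ici c, ENNReal.ofReal (1 - F x) := by
    refine setLIntegral_congr_fun measurableSet_Ici (fun x hx => ?_)
    rw [max_eq_left (by rw [← hFc]; exact hFmono hx)]
  have hFB0 : ∫⁻ x in Iio c, ENNReal.ofReal (max (F x) p - p) = 0 := by
    have : ∀ᵐ x ∂(volume.restrict (Iio c)), ENNReal.ofReal (max (F x) p - p) = 0 := by
      refine (ae_restrict_iff' measurableSet_Iio).2 (ae_of_all _ fun x hx => ?_)
      rw [max_eq_right (hFlt x hx).le, sub_self, ENNReal.ofReal_zero]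
    rw [lintegral_congr_ae this, lintegral_zero]
  obtain ⟨hIF, hVF⟩ := quantile_integral hFmono hFrc hF1 c hp1 hFne hFbdd
    (by rw [hFA']; exact hAF) (by rw [hFB0]; exact ENNReal.zero_ne_top)
  obtain ⟨hIG, hVG⟩ := quantile_integral hGmono hGrc hG1 c hp1 hGne hGbdd hAG hBG
  have hmF : Measurable F := hFmono.measurable
  have hmG : Measurable G := hGmono.measurable
  -- transfer lintegrals from Ici to Ioi
  have hres : volume.restrict (Ioi c) = volume.restrict (Ici c) :=
    Measure.restrict_congr_set Ioi_ae_eq_Ici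
  -- real tail integrals
  have hIF' : IntegrableOn (fun x => 1 - F x) (Ioi c) volume := by
    constructor
    · exact (measurable_const.sub hmF).aestronglyMeasurable
    · rw [hasFiniteIntegral_iff_ofReal (ae_of_all _ fun x => sub_nonneg.2 (hF1 x))]
      rw [hres]
      exact hAF.lt_top
  have hIG' : IntegrableOn (fun x => 1 - G x) (Ioi c) volume := by
    constructor
    · exact (measurable_const.sub hmG).aestronglyMeasurable
    · rw [hasFiniteIntegral_iff_ofReal (ae_of_all _ fun x => sub_nonneg.2 (hG1 x))]
      rw [hres]
      exact hTG.lt_top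
  have hIGmax : IntegrableOn (fun x => 1 - max (G x) p) (Ioi c) volume := by
    constructor
    · exact (measurable_const.sub (hmG.max measurable_const)).aestronglyMeasurable
    · rw [hasFiniteIntegral_iff_ofReal (ae_of_all _ fun x => sub_nonneg.2 (max_le (hG1 x) hp1.le))]
      rw [hres]
      exact hAG.lt_top
  have hIBG : IntegrableOn (fun x => max (G x) p - p) (Iio c) volume := by
    constructor
    · exact ((hmG.max measurable_const).sub measurable_const).aestronglyMeasurable
    · rw [hasFiniteIntegral_iff_ofReal (ae_of_all _ fun x => sub_nonneg.2 (le_max_right (G x) p))]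
      exact hBG.lt_top
  have hVIF : ∫ x in Ioi c, (1 - F x) = (∫⁻ x in Ici c, ENNReal.ofReal (1 - F x)).toReal := by
    rw [integral_eq_lintegral_of_nonneg_ae (ae_of_all _ fun x => sub_nonneg.2 (hF1 x))
      (measurable_const.sub hmF).aestronglyMeasurable, hres]
  have hVIG : ∫ x in Ioi c, (1 - G x) = (∫⁻ x in Ici c, ENNReal.ofReal (1 - G x)).toReal := by
    rw [integral_eq_lintegral_of_nonneg_ae (ae_of_all _ fun x => sub_nonneg.2 (hG1 x))
      (measurable_const.sub hmG).aestronglyMeasurable, hres]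
  have hVIGmax : ∫ x in Ioi c, (1 - max (G x) p)
      = (∫⁻ x in Ici c, ENNReal.ofReal (1 - max (G x) p)).toReal := by
    rw [integral_eq_lintegral_of_nonneg_ae (ae_of_all _ fun x => sub_nonneg.2 (max_le (hG1 x) hp1.le))
      (measurable_const.sub (hmG.max measurable_const)).aestronglyMeasurable, hres]
  have hVIBG : ∫ x in Iio c, (max (G x) p - p)
      = (∫⁻ x in Iio c, ENNReal.ofReal (max (G x) p - p)).toReal := by
    rw [integral_eq_lintegral_of_nonneg_ae (ae_of_all _ fun x => sub_nonneg.2 (le_max_right (G x) p))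
      ((hmG.max measurable_const).sub measurable_const).aestronglyMeasurable]
  have htail : ∫ x in Ioi c, (G x - F x)
      = (∫ x in Ioi c, (1 - F x)) - ∫ x in Ioi c, (1 - G x) := by
    rw [← integral_sub hIF' hIG']
    apply integral_congr_ae
    exact ae_of_all _ fun x => by ring
  -- the key identity
  have hkey : gapFun p F G
      = (∫ x in Ioi c, ((1 - G x) - (1 - max (G x) p))) + ∫ x in Iio c, (max (G x) p - p) := by
    have h1 : gapFun p F G = (∫ u in Ioc p 1, qtl F u) - (∫ u in Ioc p 1, qtl G u)
        - ∫ x in Ioi c, (G x - F x) := by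
      rw [gapFun, intervalIntegral.integral_of_le hp1.le, integral_sub hIF hIG]
    have hRHS : (∫ x in Ioi c, ((1 - G x) - (1 - max (G x) p)))
        = (∫⁻ x in Ici c, ENNReal.ofReal (1 - G x)).toReal
          - (∫⁻ x in Ici c, ENNReal.ofReal (1 - max (G x) p)).toReal := by
      rw [integral_sub hIG' hIGmax, hVIG, hVIGmax]
    rw [h1, hVF, hVG, htail, hVIF, hVIG, hFA', hFB0, hRHS, hVIBG, ENNReal.toReal_zero]
    ring
  have habs1 : ∀ x : ℝ, (1 - G x) - (1 - max (G x) p) = max (G x) p - G x := fun x => by ring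
  set q := qtl G p with hq
  set D := |G c - p| with hD
  have hD0 : 0 ≤ D := abs_nonneg _
  -- pointwise bounds
  have hbnd1 : ∀ x ∈ Ioi c, (1 - G x) - (1 - max (G x) p) ≤ (Ioo c q).indicator (fun _ => D) x := by
    intro x hx
    rw [habs1]
    by_cases hxq : q ≤ x
    · have : p ≤ G x := (hGgal x).1 hxq
      rw [max_eq_left this, sub_self]
      exact indicator_nonneg (fun _ _ => hD0) x
    · push_neg at hxq
      have hGxp : G x < p := by
        by_contra hcon
        push_neg at hcon
        exact absurd ((hGgal x).2 hcon) (not_le.2 hxq)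
      have hxmem : x ∈ Ioo c q := ⟨hx, hxq⟩
      rw [indicator_of_mem hxmem, max_eq_right hGxp.le]
      have h1 : G c ≤ G x := hGmono (le_of_lt hx)
      have h2 : p - G x ≤ p - G c := by linarith
      have h3 : p - G c ≤ |G c - p| := by
        rw [abs_sub_comm]
        exact le_abs_self _
      linarith
  have hbnd2 : ∀ x ∈ Iio c, max (G x) p - p ≤ (Ico q c).indicator (fun _ => D) x := by
    intro x hx
    by_cases hxq : q ≤ x
    · have hpG : p ≤ G x := (hGgal x).1 hxq
      have hxmem : x ∈ Ico q c := ⟨hxq, hx⟩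
      rw [indicator_of_mem hxmem, max_eq_left hpG]
      have h1 : G x ≤ G c := hGmono (le_of_lt hx)
      have h3 : G c - p ≤ |G c - p| := le_abs_self _
      linarith
    · push_neg at hxq
      have hGxp : G x < p := by
        by_contra hcon
        push_neg at hcon
        exact absurd ((hGgal x).2 hcon) (not_le.2 hxq)
      rw [max_eq_right hGxp.le, sub_self]
      exact indicator_nonneg (fun _ _ => hD0) x
  -- indicator integrals
  have hind1 : Integrable ((Ioo c q).indicator (fun _ => D)) (volume.restrict (Ioi c)) := by
    apply Integrable.integrableOn
    refine (integrable_indicator_iff measurableSet_Ioo).2 ?_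
    exact integrableOn_const (by rw [Real.volume_Ioo]; exact ENNReal.ofReal_ne_top)
  have hind2 : Integrable ((Ico q c).indicator (fun _ => D)) (volume.restrict (Iio c)) := by
    apply Integrable.integrableOn
    refine (integrable_indicator_iff measurableSet_Ico).2 ?_
    exact integrableOn_const (by rw [Real.volume_Ico]; exact ENNReal.ofReal_ne_top)
  have hval1 : ∫ x in Ioi c, (Ioo c q).indicator (fun _ => D) x
      = D * (ENNReal.ofReal (q - c)).toReal := by
    rw [setIntegral_indicator measurableSet_Ioo]
    have : Ioi c ∩ Ioo c q = Ioo c q := inter_eq_right.2 (fun x hx => hx.1)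
    rw [this, setIntegral_const, measureReal_def, Real.volume_Ioo, smul_eq_mul, mul_comm]
  have hval2 : ∫ x in Iio c, (Ico q c).indicator (fun _ => D) x
      = D * (ENNReal.ofReal (c - q)).toReal := by
    rw [setIntegral_indicator measurableSet_Ico]
    have : Iio c ∩ Ico q c = Ico q c := inter_eq_right.2 (fun x hx => hx.2)
    rw [this, setIntegral_const, measureReal_def, Real.volume_Ico, smul_eq_mul, mul_comm]
  -- integrands integrable (for mono)
  have hIint1 : IntegrableOn (fun x => (1 - G x) - (1 - max (G x) p)) (Ioi c) volume :=
    hIG'.sub hIGmax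
  constructor
  · rw [hkey]
    have g1 : 0 ≤ ∫ x in Ioi c, ((1 - G x) - (1 - max (G x) p)) := by
      refine setIntegral_nonneg measurableSet_Ioi fun x _ => ?_
      have := le_max_left (G x) p
      linarith
    have g2 : 0 ≤ ∫ x in Iio c, (max (G x) p - p) := by
      refine setIntegral_nonneg measurableSet_Iio fun x _ => ?_
      have := le_max_right (G x) p
      linarith
    linarith
  · rw [hkey]
    have m1 : ∫ x in Ioi c, ((1 - G x) - (1 - max (G x) p))
        ≤ ∫ x in Ioi c, (Ioo c q).indicator (fun _ => D) x :=
      setIntegral_mono_on hIint1 hind1 measurableSet_Ioi hbnd1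
    have m2 : ∫ x in Iio c, (max (G x) p - p)
        ≤ ∫ x in Iio c, (Ico q c).indicator (fun _ => D) x :=
      setIntegral_mono_on hIBG hind2 measurableSet_Iio hbnd2
    rw [hval1] at m1
    rw [hval2] at m2
    have hsum : (ENNReal.ofReal (q - c)).toReal + (ENNReal.ofReal (c - q)).toReal = |q - c| := by
      rcases le_total c q with h | h
      · have h0 : ENNReal.ofReal (c - q) = 0 := ENNReal.ofReal_eq_zero.2 (by linarith)
        rw [h0, ENNReal.toReal_zero, ENNReal.toReal_ofReal (by linarith : (0:ℝ) ≤ q - c),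
          abs_of_nonneg (by linarith : (0:ℝ) ≤ q - c)]
        ring
      · have h0 : ENNReal.ofReal (q - c) = 0 := ENNReal.ofReal_eq_zero.2 (by linarith)
        rw [h0, ENNReal.toReal_zero, ENNReal.toReal_ofReal (by linarith : (0:ℝ) ≤ c - q),
          abs_of_nonpos (by linarith : q - c ≤ 0)]
        ring
    have : D * (ENNReal.ofReal (q - c)).toReal + D * (ENNReal.ofReal (c - q)).toReal
        = D * |q - c| := by rw [← mul_add, hsum]
    rw [abs_sub_comm (G c) p] at *
    calc (∫ x in Ioi c, ((1 - G x) - (1 - max (G x) p))) + ∫ x in Iio c, (max (G x) p - p)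
        ≤ D * (ENNReal.ofReal (q - c)).toReal + D * (ENNReal.ofReal (c - q)).toReal := by linarith
      _ = D * |q - c| := this
      _ = |q - c| * D := mul_comm _ _

section CdfSec

variable (μ : Measure ℝ) [IsProbabilityMeasure μ]

lemma cdfOf_eq : cdfOf μ = ⇑(cdf μ) := funext fun x => (cdf_eq_real μ x).symm

lemma cdfOf_mono : Monotone (cdfOf μ) := by rw [cdfOf_eq]; exact monotone_cdf μ

lemma cdfOf_rc : ∀ x, ContinuousWithinAt (cdfOf μ) (Ici x) x := by
  rw [cdfOf_eq]; exact fun x => (cdf μ).right_continuous x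

lemma cdfOf_nonneg : ∀ x, 0 ≤ cdfOf μ x := fun x => ENNReal.toReal_nonneg

lemma cdfOf_le_one : ∀ x, cdfOf μ x ≤ 1 := by
  intro x
  rw [cdfOf]
  have h : μ (Iic x) ≤ 1 := prob_le_one
  calc (μ (Iic x)).toReal ≤ (1 : ℝ≥0∞).toReal := ENNReal.toReal_mono (by simp) h
    _ = 1 := by simp

lemma cdfOf_ne_sets : ∀ u : ℝ, u < 1 → {x | u ≤ cdfOf μ x}.Nonempty := by
  intro u hu
  have h := tendsto_cdf_atTop μ
  have : ∀ᶠ x in atTop, u ≤ cdf μ x := h.eventually (eventually_ge_nhds hu)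
  obtain ⟨x, hx⟩ := this.exists
  exact ⟨x, by rw [mem_setOf_eq, cdfOf_eq]; exact hx⟩

lemma cdfOf_bdd_sets : ∀ u : ℝ, 0 < u → BddBelow {x | u ≤ cdfOf μ x} := by
  intro u hu
  have h := tendsto_cdf_atBot μ
  have : ∀ᶠ x in atBot, cdf μ x < u := h.eventually (eventually_lt_nhds hu)
  obtain ⟨x₀, hx₀⟩ := this.exists
  refine ⟨x₀, fun y hy => ?_⟩
  by_contra hyx
  push_neg at hyx
  have : cdf μ y ≤ cdf μ x₀ := monotone_cdf μ hyx.le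
  rw [mem_setOf_eq, cdfOf_eq] at hy
  linarith
lemma cdfOf_gal {p : ℝ} (hp0 : 0 < p) (hp1 : p < 1) (x : ℝ) :
    qtl (cdfOf μ) p ≤ x ↔ p ≤ cdfOf μ x :=
  qtl_le_iff (cdfOf_mono μ) (cdfOf_rc μ) (cdfOf_ne_sets μ p hp1) (cdfOf_bdd_sets μ p hp0) x

lemma cdfOf_qtl_eq {p : ℝ} (hp0 : 0 < p) (hp1 : p < 1)
    (hcont : ContinuousAt (cdfOf μ) (qtl (cdfOf μ) p)) :
    cdfOf μ (qtl (cdfOf μ) p) = p := by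
  set c := qtl (cdfOf μ) p with hc
  have hge : p ≤ cdfOf μ c := (cdfOf_gal μ hp0 hp1 c).1 le_rfl
  have hle : cdfOf μ c ≤ p := by
    have hlim : Tendsto (cdfOf μ) (𝓝[<] c) (𝓝 (cdfOf μ c)) :=
      hcont.continuousWithinAt.tendsto
    refine le_of_tendsto hlim ?_
    filter_upwards [self_mem_nhdsWithin] with y hy
    by_contra hcon
    push_neg at hcon
    exact absurd ((cdfOf_gal μ hp0 hp1 y).2 hcon.le) (not_le.2 hy)
  linarith

lemma cdfOf_lt_of_lt_qtl {p : ℝ} (hp0 : 0 < p) (hp1 : p < 1) :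
    ∀ x, x < qtl (cdfOf μ) p → cdfOf μ x < p := by
  intro x hx
  by_contra hcon
  push_neg at hcon
  exact absurd ((cdfOf_gal μ hp0 hp1 x).2 hcon) (not_le.2 hx)

lemma tail_lintegral_ne_top (hμ : Integrable (fun x => max x 0) μ) (c : ℝ) :
    ∫⁻ x in Ici c, ENNReal.ofReal (1 - cdfOf μ x) ≠ ⊤ := by
  have hofReal : ∀ x : ℝ, ENNReal.ofReal (1 - cdfOf μ x) = μ (Ioi x) := by
    intro x
    rw [cdfOf]
    rw [ENNReal.ofReal_sub _ ENNReal.toReal_nonneg, ENNReal.ofReal_one,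
      ENNReal.ofReal_toReal (measure_ne_top μ _)]
    rw [← compl_Iic, prob_compl_eq_one_sub measurableSet_Iic]
  have hrw : ∫⁻ x in Ici c, ENNReal.ofReal (1 - cdfOf μ x) = ∫⁻ x in Ici c, μ (Ioi x) :=
    lintegral_congr fun x => hofReal x
  rw [hrw]
  -- Fubini with the product measure volume.prod μ
  set A : Set (ℝ × ℝ) := {z : ℝ × ℝ | c ≤ z.1 ∧ z.1 < z.2} with hAdef
  have hA : MeasurableSet A := by
    have h1 : MeasurableSet {z : ℝ × ℝ | c ≤ z.1} := measurable_fst measurableSet_Ici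
    have h2 : MeasurableSet {z : ℝ × ℝ | z.1 < z.2} := measurableSet_lt measurable_fst measurable_snd
    exact h1.inter h2
  have h1 : (volume.prod μ) A = ∫⁻ x in Ici c, μ (Ioi x) := by
    rw [Measure.prod_apply hA, ← lintegral_indicator measurableSet_Ici]
    apply lintegral_congr
    intro x
    by_cases hx : x ∈ Ici c
    · have : Prod.mk x ⁻¹' A = Ioi x := by
        ext y
        simp only [mem_preimage, hAdef, mem_setOf_eq, mem_Ioi]
        exact ⟨fun ⟨_, h⟩ => h, fun h => ⟨hx, h⟩⟩
      rw [this, indicator_of_mem hx]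
    · have : Prod.mk x ⁻¹' A = ∅ := by
        ext y
        simp only [mem_preimage, hAdef, mem_setOf_eq, mem_empty_iff_false, iff_false]
        rintro ⟨h, -⟩; exact hx h
      rw [this, measure_empty, indicator_of_notMem hx]
  have h2 : (volume.prod μ) A = ∫⁻ y, ENNReal.ofReal (y - c) ∂μ := by
    rw [Measure.prod_apply_symm hA]
    apply lintegral_congr
    intro y
    have : (fun x => (x, y)) ⁻¹' A = Ico c y := by
      ext x
      simp only [mem_preimage, hAdef, mem_setOf_eq, mem_Ico]
    rw [this, Real.volume_Ico]
  have h3 : ∫⁻ y, ENNReal.ofReal (y - c) ∂μ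
      ≤ ∫⁻ y, (ENNReal.ofReal (max y 0) + ENNReal.ofReal |c|) ∂μ := by
    apply lintegral_mono
    intro y
    have hle : y - c ≤ max y 0 + |c| := by
      have := le_max_left y 0
      have := neg_abs_le c
      linarith
    calc ENNReal.ofReal (y - c) ≤ ENNReal.ofReal (max y 0 + |c|) :=
          ENNReal.ofReal_le_ofReal hle
      _ = ENNReal.ofReal (max y 0) + ENNReal.ofReal |c| :=
          ENNReal.ofReal_add (le_max_right y 0) (abs_nonneg c)
  have h4 : ∫⁻ y, (ENNReal.ofReal (max y 0) + ENNReal.ofReal |c|) ∂μ < ⊤ := by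
    rw [lintegral_add_right _ measurable_const, lintegral_const]
    refine ENNReal.add_lt_top.2 ⟨?_, ?_⟩
    · exact hμ.lintegral_lt_top
    · simp [ENNReal.ofReal_lt_top]
  rw [← h1, h2]
  exact (lt_of_le_of_lt h3 h4).ne

end CdfSec

variable {Ω : Type*} [MeasurableSpace Ω]

lemma empCdf_mono (X : ℕ → Ω → ℝ) (n : ℕ) (ω : Ω) : Monotone (empCdf X n ω) := by
  intro s t hst
  have hsum : (∑ i ∈ Finset.range n, if X i ω ≤ s then (1 : ℝ) else 0)
      ≤ ∑ i ∈ Finset.range n, if X i ω ≤ t then (1 : ℝ) else 0 := by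
    refine Finset.sum_le_sum fun i _ => ?_
    split_ifs with h1 h2
    · exact le_rfl
    · exact absurd (le_trans h1 hst) h2
    · norm_num
    · exact le_rfl
  exact div_le_div_of_nonneg_right hsum (Nat.cast_nonneg n)

lemma empCdf_nonneg (X : ℕ → Ω → ℝ) (n : ℕ) (ω : Ω) (t : ℝ) : 0 ≤ empCdf X n ω t :=
  div_nonneg (Finset.sum_nonneg fun i _ => by positivity) (Nat.cast_nonneg n)

lemma empCdf_le_one (X : ℕ → Ω → ℝ) (n : ℕ) (ω : Ω) (t : ℝ) : empCdf X n ω t ≤ 1 := by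
  rcases Nat.eq_zero_or_pos n with hn | hn
  · subst hn
    simp [empCdf]
  · have hsum : (∑ i ∈ Finset.range n, if X i ω ≤ t then (1 : ℝ) else 0) ≤ n := by
      calc (∑ i ∈ Finset.range n, if X i ω ≤ t then (1 : ℝ) else 0)
          ≤ ∑ i ∈ Finset.range n, (1 : ℝ) := by
            refine Finset.sum_le_sum fun i _ => ?_
            split_ifs <;> norm_num
        _ = n := by simp
    rw [empCdf, div_le_one (by exact_mod_cast hn)]
    exact hsum

lemma empCdf_zero (X : ℕ → Ω → ℝ) (n : ℕ) (ω : Ω) {t : ℝ}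
    (ht : ∀ i ∈ Finset.range n, t < X i ω) : empCdf X n ω t = 0 := by
  rw [empCdf]
  rw [Finset.sum_eq_zero fun i hi => if_neg (not_le.2 (ht i hi))]
  exact zero_div _

lemma empCdf_one (X : ℕ → Ω → ℝ) {n : ℕ} (hn : n ≠ 0) (ω : Ω) {t : ℝ}
    (ht : ∀ i ∈ Finset.range n, X i ω ≤ t) : empCdf X n ω t = 1 := by
  rw [empCdf]
  rw [Finset.sum_congr rfl fun i hi => if_pos (ht i hi), Finset.sum_const, Finset.card_range]
  rw [nsmul_eq_mul, mul_one, div_self (by exact_mod_cast hn)]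

lemma empCdf_rc (X : ℕ → Ω → ℝ) (n : ℕ) (ω : Ω) :
    ∀ x, ContinuousWithinAt (empCdf X n ω) (Ici x) x := by
  intro x
  have hterm : ∀ i : ℕ, Tendsto (fun t => if X i ω ≤ t then (1 : ℝ) else 0) (𝓝[≥] x)
      (𝓝 (if X i ω ≤ x then (1 : ℝ) else 0)) := by
    intro i
    by_cases hi : X i ω ≤ x
    · rw [if_pos hi]
      refine Tendsto.congr' ?_ tendsto_const_nhds
      filter_upwards [self_mem_nhdsWithin] with t ht
      rw [if_pos (le_trans hi ht)]
    · rw [if_neg hi]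
      push_neg at hi
      refine Tendsto.congr' ?_ tendsto_const_nhds
      have hev : ∀ᶠ t in 𝓝[≥] x, t < X i ω :=
        eventually_nhdsWithin_of_eventually_nhds (eventually_lt_nhds hi)
      filter_upwards [hev] with t ht
      rw [if_neg (not_le.2 ht)]
  have hsum := tendsto_finset_sum (Finset.range n)
    (fun i (_ : i ∈ Finset.range n) => hterm i)
  exact (hsum.div_const _)

lemma empCdf_meas {X : ℕ → Ω → ℝ} (hmeas : ∀ i, Measurable (X i)) (n : ℕ) (t : ℝ) :
    Measurable (fun ω => empCdf X n ω t) := by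
  apply Measurable.div_const
  apply Finset.measurable_sum
  intro i _
  exact Measurable.ite ((hmeas i) measurableSet_Iic) measurable_const measurable_const

/-- SLLN for the empirical cdf at a fixed point. -/
lemma empCdf_tendsto_ae (P : Measure Ω) [IsProbabilityMeasure P]
    (μ : Measure ℝ) [IsProbabilityMeasure μ]
    {X : ℕ → Ω → ℝ} (hmeas : ∀ i, Measurable (X i))
    (hindep : iIndepFun X P)
    (hdist : ∀ i, Measure.map (X i) P = μ) (t : ℝ) :
    ∀ᵐ ω ∂P, Tendsto (fun n => empCdf X n ω t) atTop (𝓝 (cdfOf μ t)) := by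
  set f : ℝ → ℝ := fun x => if x ≤ t then (1 : ℝ) else 0 with hf
  have hfm : Measurable f := Measurable.ite measurableSet_Iic measurable_const measurable_const
  set Y : ℕ → Ω → ℝ := fun i ω => f (X i ω) with hY
  have hYmeas : ∀ i, Measurable (Y i) := fun i => hfm.comp (hmeas i)
  have hYbdd : ∀ i, ∀ ω, ‖Y i ω‖ ≤ 1 := by
    intro i ω
    have hYv : Y i ω = if X i ω ≤ t then (1:ℝ) else 0 := rfl
    rw [hYv, Real.norm_eq_abs]
    split_ifs <;> norm_num
  have hint : Integrable (Y 0) P := by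
    refine Integrable.mono' (integrable_const 1) (hYmeas 0).aestronglyMeasurable ?_
    exact ae_of_all _ fun ω => hYbdd 0 ω
  have hYindep : iIndepFun Y P :=
    hindep.comp (fun _ => f) (fun _ => hfm)
  have hYpair : Pairwise (Function.onFun (IndepFun · · P) Y) := fun i j hij => hYindep.indepFun hij
  have hYident : ∀ i, IdentDistrib (Y i) (Y 0) P P := by
    intro i
    have hXid : IdentDistrib (X i) (X 0) P P :=
      ⟨(hmeas i).aemeasurable, (hmeas 0).aemeasurable, by rw [hdist i, hdist 0]⟩
    exact hXid.comp hfm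
  have hmean : P[Y 0] = cdfOf μ t := by
    have hind : Y 0 = (X 0 ⁻¹' Iic t).indicator (fun _ => (1 : ℝ)) := by
      funext ω
      rw [hY]
      by_cases h : X 0 ω ≤ t
      · rw [indicator_of_mem (by exact h : ω ∈ X 0 ⁻¹' Iic t)]
        simp [hf, h]
      · rw [indicator_of_notMem (by exact h : ω ∉ X 0 ⁻¹' Iic t)]
        simp [hf, h]
    rw [hind, integral_indicator_const _ ((hmeas 0) measurableSet_Iic)]
    rw [smul_eq_mul, mul_one, measureReal_def, cdfOf, ← hdist 0,
      Measure.map_apply (hmeas 0) measurableSet_Iic]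
  have := strong_law_ae_real Y hint hYpair hYident
  rw [hmean] at this
  exact this

/-- Chebyshev bound for the empirical cdf at a fixed point. -/
lemma empCdf_chebyshev (P : Measure Ω) [IsProbabilityMeasure P]
    (μ : Measure ℝ) [IsProbabilityMeasure μ]
    {X : ℕ → Ω → ℝ} (hmeas : ∀ i, Measurable (X i))
    (hindep : iIndepFun X P)
    (hdist : ∀ i, Measure.map (X i) P = μ) (t : ℝ) {M : ℝ} (hM : 0 < M)
    {n : ℕ} (hn : 1 ≤ n) :
    P {ω | M ≤ Real.sqrt n * |empCdf X n ω t - cdfOf μ t|}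
      ≤ ENNReal.ofReal (1 / M ^ 2) := by
  set f : ℝ → ℝ := fun x => if x ≤ t then (1 : ℝ) else 0 with hf
  have hfm : Measurable f := Measurable.ite measurableSet_Iic measurable_const measurable_const
  set Y : ℕ → Ω → ℝ := fun i ω => f (X i ω) with hY
  have hYmeas : ∀ i, Measurable (Y i) := fun i => hfm.comp (hmeas i)
  have hYbdd : ∀ i, ∀ ω, ‖Y i ω‖ ≤ 1 := by
    intro i ω
    have hYv : Y i ω = if X i ω ≤ t then (1:ℝ) else 0 := rfl
    rw [hYv, Real.norm_eq_abs]
    split_ifs <;> norm_num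
  have hY2 : ∀ i, MemLp (Y i) 2 P := fun i =>
    MemLp.of_bound (hYmeas i).aestronglyMeasurable 1 (ae_of_all _ fun ω => hYbdd i ω)
  have hYint : ∀ i, Integrable (Y i) P := fun i => (hY2 i).integrable (by norm_num)
  have hYindep : iIndepFun Y P :=
    hindep.comp (fun _ => f) (fun _ => hfm)
  set S : Ω → ℝ := fun ω => ∑ i ∈ Finset.range n, Y i ω with hS
  have hSsum : S = ∑ i ∈ Finset.range n, Y i := by
    funext ω; rw [hS]; simp
  have hS2 : MemLp S 2 P := by
    rw [hSsum]
    exact memLp_finset_sum' _ (fun i _ => hY2 i)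
  -- expectation of each Y i
  have hmean : ∀ i, P[Y i] = cdfOf μ t := by
    intro i
    have hind : Y i = (X i ⁻¹' Iic t).indicator (fun _ => (1 : ℝ)) := by
      funext ω
      rw [hY]
      by_cases h : X i ω ≤ t
      · rw [indicator_of_mem (by exact h : ω ∈ X i ⁻¹' Iic t)]
        simp [hf, h]
      · rw [indicator_of_notMem (by exact h : ω ∉ X i ⁻¹' Iic t)]
        simp [hf, h]
    rw [hind, integral_indicator_const _ ((hmeas i) measurableSet_Iic)]
    rw [smul_eq_mul, mul_one, measureReal_def, cdfOf, ← hdist i,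
      Measure.map_apply (hmeas i) measurableSet_Iic]
  have hSmean : P[S] = n * cdfOf μ t := by
    rw [hS]
    rw [integral_finset_sum _ (fun i _ => hYint i)]
    rw [Finset.sum_congr rfl (fun i _ => hmean i), Finset.sum_const, Finset.card_range,
      nsmul_eq_mul]
  -- variance bound
  have hvar1 : ∀ i, variance (Y i) P ≤ 1 := by
    intro i
    refine le_trans (variance_le_expectation_sq (hYmeas i).aestronglyMeasurable) ?_
    have hint2 : Integrable (Y i ^ 2) P := (hY2 i).integrable_sq
    have hle : ∀ ω, (Y i ^ 2) ω ≤ (fun _ => (1:ℝ)) ω := by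
      intro ω
      have hYv : Y i ω = if X i ω ≤ t then (1:ℝ) else 0 := rfl
      simp only [Pi.pow_apply, hYv]
      split_ifs <;> norm_num
    have hmono := integral_mono hint2 (integrable_const (1:ℝ)) hle
    simpa using hmono
  have hvarS : variance S P ≤ n := by
    rw [hSsum, IndepFun.variance_sum (fun i _ => hY2 i)
      (fun i _ j _ hij => hYindep.indepFun hij)]
    calc ∑ i ∈ Finset.range n, variance (Y i) P ≤ ∑ i ∈ Finset.range n, (1:ℝ) :=
          Finset.sum_le_sum fun i _ => hvar1 i
      _ = n := by simp
  -- Chebyshev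
  have hnpos : (0:ℝ) < n := by exact_mod_cast hn
  have hsq : Real.sqrt n > 0 := Real.sqrt_pos.2 hnpos
  have hc : (0:ℝ) < M * Real.sqrt n := mul_pos hM hsq
  have hcheb := meas_ge_le_variance_div_sq (μ := P) hS2 hc
  -- identify the sets
  have hsets : {ω | M ≤ Real.sqrt n * |empCdf X n ω t - cdfOf μ t|}
      ⊆ {ω | M * Real.sqrt n ≤ |S ω - P[S]|} := by
    intro ω hω
    rw [mem_setOf_eq] at hω ⊢
    rw [hSmean]
    have hemp : empCdf X n ω t = S ω / n := rfl
    rw [hemp] at hω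
    have h1 : S ω / n - cdfOf μ t = (S ω - n * cdfOf μ t) / n := by
      field_simp
    rw [h1, abs_div, abs_of_pos hnpos] at hω
    have hnn : Real.sqrt n * Real.sqrt n = (n:ℝ) := Real.mul_self_sqrt hnpos.le
    have hmul := mul_le_mul_of_nonneg_right hω (Real.sqrt_nonneg n)
    calc M * Real.sqrt n
        ≤ Real.sqrt n * (|S ω - ↑n * cdfOf μ t| / ↑n) * Real.sqrt n := hmul
      _ = |S ω - ↑n * cdfOf μ t| * (Real.sqrt n * Real.sqrt n) / n := by ring
      _ = |S ω - ↑n * cdfOf μ t| := by rw [hnn]; field_simp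
  refine le_trans (le_trans (measure_mono hsets) hcheb) ?_
  apply ENNReal.ofReal_le_ofReal
  have h4 : (M * Real.sqrt n) ^ 2 = M ^ 2 * n := by
    rw [mul_pow, Real.sq_sqrt hnpos.le]
  rw [h4]
  have h5 : variance S P / (M ^ 2 * n) ≤ (n:ℝ) / (M ^ 2 * n) :=
    div_le_div_of_nonneg_right hvarS (by positivity)
  refine le_trans h5 (le_of_eq ?_)
  field_simp

/-- The set `{x | u ≤ empCdf X n ω x}` is nonempty (for `n ≠ 0`, `u ≤ 1`). -/
lemma empCdf_set_nonempty (X : ℕ → Ω → ℝ) {n : ℕ} (hn : n ≠ 0) (ω : Ω) {u : ℝ} (hu : u ≤ 1) :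
    {x | u ≤ empCdf X n ω x}.Nonempty := by
  have hne : (Finset.range n).Nonempty := Finset.nonempty_range_iff.2 hn
  set b := (Finset.range n).sup' hne (fun i => X i ω) with hb
  refine ⟨b, ?_⟩
  rw [mem_setOf_eq, empCdf_one X hn ω (fun i hi => Finset.le_sup' (fun i => X i ω) hi)]
  exact hu

/-- The set `{x | u ≤ empCdf X n ω x}` is bounded below (for `n ≠ 0`, `0 < u`). -/
lemma empCdf_set_bddBelow (X : ℕ → Ω → ℝ) {n : ℕ} (hn : n ≠ 0) (ω : Ω) {u : ℝ} (hu : 0 < u) :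
    BddBelow {x | u ≤ empCdf X n ω x} := by
  have hne : (Finset.range n).Nonempty := Finset.nonempty_range_iff.2 hn
  set a := (Finset.range n).inf' hne (fun i => X i ω) with ha
  refine ⟨a, fun x hx => ?_⟩
  by_contra hax
  push_neg at hax
  have h0 : empCdf X n ω x = 0 :=
    empCdf_zero X n ω (fun i hi => lt_of_lt_of_le hax (Finset.inf'_le (fun i => X i ω) hi))
  rw [mem_setOf_eq, h0] at hx
  linarith

lemma qtl_emp_gal (X : ℕ → Ω → ℝ) {n : ℕ} (hn : n ≠ 0) (ω : Ω) {u : ℝ}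
    (hu0 : 0 < u) (hu1 : u ≤ 1) (x : ℝ) :
    qtl (empCdf X n ω) u ≤ x ↔ u ≤ empCdf X n ω x :=
  qtl_le_iff (empCdf_mono X n ω) (empCdf_rc X n ω)
    (empCdf_set_nonempty X hn ω hu1) (empCdf_set_bddBelow X hn ω hu0) x

lemma qtl_emp_meas {X : ℕ → Ω → ℝ} (hmeas : ∀ i, Measurable (X i)) (n : ℕ) {p : ℝ}
    (hp0 : 0 < p) (hp1 : p ≤ 1) :
    Measurable (fun ω => qtl (empCdf X n ω) p) := by
  rcases Nat.eq_zero_or_pos n with hn | hn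
  · subst hn
    have : (fun ω => qtl (empCdf X 0 ω) p) = fun _ => sInf (∅ : Set ℝ) := by
      funext ω
      rw [qtl]
      congr 1
      ext x
      simp only [mem_setOf_eq, mem_empty_iff_false, iff_false, not_le]
      have : empCdf X 0 ω x = 0 := by simp [empCdf]
      rw [this]; exact hp0
    rw [this]
    exact measurable_const
  · apply measurable_of_Iic
    intro x
    have hset : (fun ω => qtl (empCdf X n ω) p) ⁻¹' Iic x
        = (fun ω => empCdf X n ω x) ⁻¹' Ici p := by
      ext ω
      simp only [mem_preimage, mem_Iic, mem_Ici]
      exact qtl_emp_gal X (Nat.pos_iff_ne_zero.1 hn) ω hp0 hp1 x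
    rw [hset]
    exact empCdf_meas hmeas n x measurableSet_Ici

lemma qtl_emp_tendsto_ae (P : Measure Ω) [IsProbabilityMeasure P]
    (μ : Measure ℝ) [IsProbabilityMeasure μ]
    {X : ℕ → Ω → ℝ} (hmeas : ∀ i, Measurable (X i))
    (hindep : iIndepFun X P)
    (hdist : ∀ i, Measure.map (X i) P = μ)
    {p : ℝ} (hp0 : 0 < p) (hp1 : p < 1)
    (hlow : ∀ δ : ℝ, 0 < δ → cdfOf μ (qtl (cdfOf μ) p - δ) < p)
    (hhigh : ∀ δ : ℝ, 0 < δ → p < cdfOf μ (qtl (cdfOf μ) p + δ)) :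
    ∀ᵐ ω ∂P, Tendsto (fun n => qtl (empCdf X n ω) p) atTop (𝓝 (qtl (cdfOf μ) p)) := by
  set c := qtl (cdfOf μ) p with hc
  have h1 : ∀ᵐ ω ∂P, ∀ k : ℕ,
      Tendsto (fun n => empCdf X n ω (c + 1 / (k + 1))) atTop (𝓝 (cdfOf μ (c + 1 / (k + 1)))) :=
    ae_all_iff.2 fun k => empCdf_tendsto_ae P μ hmeas hindep hdist _
  have h2 : ∀ᵐ ω ∂P, ∀ k : ℕ,
      Tendsto (fun n => empCdf X n ω (c - 1 / (k + 1))) atTop (𝓝 (cdfOf μ (c - 1 / (k + 1)))) :=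
    ae_all_iff.2 fun k => empCdf_tendsto_ae P μ hmeas hindep hdist _
  filter_upwards [h1, h2] with ω hω1 hω2
  rw [Metric.tendsto_atTop]
  intro ε hε
  obtain ⟨k, hk⟩ := exists_nat_one_div_lt hε
  have hδpos : (0:ℝ) < 1 / (k + 1) := by positivity
  have e1 : ∀ᶠ n in atTop, p < empCdf X n ω (c + 1 / (k + 1)) :=
    (hω1 k).eventually (eventually_gt_nhds (hhigh _ hδpos))
  have e2 : ∀ᶠ n in atTop, empCdf X n ω (c - 1 / (k + 1)) < p :=
    (hω2 k).eventually (eventually_lt_nhds (hlow _ hδpos))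
  have e3 : ∀ᶠ n : ℕ in atTop, n ≠ 0 := eventually_ne_atTop 0
  have hfin : ∀ᶠ n in atTop, dist (qtl (empCdf X n ω) p) c < ε := by
    filter_upwards [e1, e2, e3] with n hn1 hn2 hn3
    have hup : qtl (empCdf X n ω) p ≤ c + 1 / (k + 1) :=
      (qtl_emp_gal X hn3 ω hp0 hp1.le _).2 hn1.le
    have hdown : c - 1 / (k + 1) ≤ qtl (empCdf X n ω) p := by
      by_contra hcon
      push_neg at hcon
      have := (qtl_emp_gal X hn3 ω hp0 hp1.le (c - 1/(k+1))).1 hcon.le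
      linarith
    rw [Real.dist_eq]
    have habs : |qtl (empCdf X n ω) p - c| ≤ 1 / (k + 1) :=
      abs_le.2 ⟨by linarith, by linarith⟩
    linarith
  obtain ⟨N, hN⟩ := eventually_atTop.1 hfin
  exact ⟨N, hN⟩

end S17

open S17 in
/-- for `p ∈ (0,1)`, a cdf `F ∈ F₁⁺` continuous and strictly increasing
at `x_p := F⁻¹(p)`, and the empirical cdf `F_n` of independent random variables with
common cdf `F`, the sequence `√n · Γ_p(F, F_n)` converges to `0` in probability as
`n → ∞`. -/
theorem stmt17 {Ω : Type*} [MeasurableSpace Ω] (P : Measure Ω) [IsProbabilityMeasure P]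
    (μ : Measure ℝ) [IsProbabilityMeasure μ]
    (hμ : Integrable (fun x => max x 0) μ)
    (p : ℝ) (hp : p ∈ Ioo (0 : ℝ) 1)
    (hcont : ContinuousAt (cdfOf μ) (qtl (cdfOf μ) p))
    (hstrict : ∀ ε > (0 : ℝ),
      cdfOf μ (qtl (cdfOf μ) p - ε) < cdfOf μ (qtl (cdfOf μ) p) ∧
        cdfOf μ (qtl (cdfOf μ) p) < cdfOf μ (qtl (cdfOf μ) p + ε))
    (X : ℕ → Ω → ℝ) (hmeas : ∀ i, Measurable (X i))
    (hindep : iIndepFun X P)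
    (hdist : ∀ i, Measure.map (X i) P = μ) :
    TendstoInMeasure P
      (fun (n : ℕ) ω => Real.sqrt (n : ℝ) * gapFun p (cdfOf μ) (empCdf X n ω)) atTop
      (fun _ => (0 : ℝ)) := by
  obtain ⟨hp0, hp1⟩ := hp
  have hFc : cdfOf μ (qtl (cdfOf μ) p) = p := cdfOf_qtl_eq μ hp0 hp1 hcont
  set c := qtl (cdfOf μ) p with hc
  have hlow : ∀ δ : ℝ, 0 < δ → cdfOf μ (c - δ) < p := by
    intro δ hδ
    have h := (hstrict δ hδ).1
    rw [hFc] at h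
    exact h
  have hhigh : ∀ δ : ℝ, 0 < δ → p < cdfOf μ (c + δ) := by
    intro δ hδ
    have h := (hstrict δ hδ).2
    rw [hFc] at h
    exact h
  have hDae := qtl_emp_tendsto_ae P μ hmeas hindep hdist hp0 hp1 hlow hhigh
  have hDmeas : ∀ n : ℕ, AEStronglyMeasurable (fun ω => qtl (empCdf X n ω) p) P :=
    fun n => (qtl_emp_meas hmeas n hp0 hp1.le).aestronglyMeasurable
  have hDtim : TendstoInMeasure P (fun n ω => qtl (empCdf X n ω) p) atTop (fun _ => c) :=
    tendstoInMeasure_of_tendsto_ae hDmeas hDae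
  refine tendstoInMeasure_iff_dist.2 fun ε hε => ?_
  rw [ENNReal.tendsto_nhds_zero]
  intro η hη
  set η' := min η 1 with hη'def
  have hη'pos : 0 < η' := lt_min hη zero_lt_one
  have hη'top : η' ≠ ⊤ := ((min_le_right η 1).trans_lt ENNReal.one_lt_top).ne
  set r := η'.toReal with hrdef
  have hr : 0 < r := ENNReal.toReal_pos hη'pos.ne' hη'top
  set M := Real.sqrt (2 / r) + 1 with hMdef
  have hMpos : 0 < M := by positivity
  have hM2 : 1 / M ^ 2 ≤ r / 2 := by
    have h1 : Real.sqrt (2 / r) ^ 2 = 2 / r := Real.sq_sqrt (by positivity)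
    have h2 : 2 / r ≤ M ^ 2 := by nlinarith [Real.sqrt_nonneg (2 / r)]
    rw [div_le_div_iff₀ (by positivity : (0:ℝ) < M ^ 2) (by norm_num : (0:ℝ) < 2)]
    rw [div_le_iff₀ hr] at h2
    linarith
  have hδpos : 0 < ε / M := div_pos hε hMpos
  have hev1 : ∀ᶠ n in atTop,
      P {ω | ε / M ≤ dist (qtl (empCdf X n ω) p) c} ≤ η' / 2 :=
    (ENNReal.tendsto_nhds_zero.1 (tendstoInMeasure_iff_dist.1 hDtim (ε / M) hδpos)) (η' / 2)
      (ENNReal.half_pos hη'pos.ne')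
  filter_upwards [hev1, eventually_ge_atTop 1] with n hn1 hn2
  have hincl : {ω | ε ≤ dist (Real.sqrt n * gapFun p (cdfOf μ) (empCdf X n ω)) 0}
      ⊆ {ω | ε / M ≤ dist (qtl (empCdf X n ω) p) c}
        ∪ {ω | M ≤ Real.sqrt n * |empCdf X n ω c - cdfOf μ c|} := by
    intro ω hω
    rw [mem_setOf_eq, Real.dist_eq, sub_zero] at hω
    by_contra hcon
    rw [mem_union] at hcon
    push_neg at hcon
    obtain ⟨hA, hB⟩ := hcon
    rw [mem_setOf_eq, not_le, Real.dist_eq] at hA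
    rw [mem_setOf_eq, not_le] at hB
    have hnn : n ≠ 0 := by omega
    have hne : (Finset.range n).Nonempty := Finset.nonempty_range_iff.2 hnn
    have hgap := gap_bound hp0 hp1 (cdfOf_mono μ) (cdfOf_rc μ) (cdfOf_le_one μ)
      (fun u hu => cdfOf_ne_sets μ u hu.2) (fun u hu => cdfOf_bdd_sets μ u (lt_trans hp0 hu.1))
      hFc (cdfOf_lt_of_lt_qtl μ hp0 hp1) (tail_lintegral_ne_top μ hμ c)
      (empCdf_mono X n ω) (empCdf_rc X n ω) (empCdf_nonneg X n ω) (empCdf_le_one X n ω)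
      ((Finset.range n).inf' hne (fun i => X i ω)) ((Finset.range n).sup' hne (fun i => X i ω))
      (fun x hx => empCdf_zero X n ω
        (fun i hi => lt_of_lt_of_le hx (Finset.inf'_le (fun i => X i ω) hi)))
      (fun x hx => empCdf_one X hnn ω
        (fun i hi => le_trans (Finset.le_sup' (fun i => X i ω) hi) hx))
    obtain ⟨hg0, hg1⟩ := hgap
    have hs0 : (0:ℝ) ≤ Real.sqrt n := Real.sqrt_nonneg n
    have habs : |Real.sqrt n * gapFun p (cdfOf μ) (empCdf X n ω)|
        = Real.sqrt n * gapFun p (cdfOf μ) (empCdf X n ω) :=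
      abs_of_nonneg (mul_nonneg hs0 hg0)
    rw [habs] at hω
    have hchain : Real.sqrt n * gapFun p (cdfOf μ) (empCdf X n ω)
        ≤ |qtl (empCdf X n ω) p - c| * (Real.sqrt n * |empCdf X n ω c - cdfOf μ c|) := by
      calc Real.sqrt n * gapFun p (cdfOf μ) (empCdf X n ω)
          ≤ Real.sqrt n * (|qtl (empCdf X n ω) p - c| * |empCdf X n ω c - p|) :=
            mul_le_mul_of_nonneg_left hg1 hs0
        _ = |qtl (empCdf X n ω) p - c| * (Real.sqrt n * |empCdf X n ω c - cdfOf μ c|) := by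
            rw [hFc]; ring
    have hlt : |qtl (empCdf X n ω) p - c| * (Real.sqrt n * |empCdf X n ω c - cdfOf μ c|)
        < (ε / M) * M :=
      mul_lt_mul'' hA hB (abs_nonneg _) (mul_nonneg hs0 (abs_nonneg _))
    have heq : (ε / M) * M = ε := div_mul_cancel₀ ε hMpos.ne'
    linarith
  calc P {ω | ε ≤ dist (Real.sqrt n * gapFun p (cdfOf μ) (empCdf X n ω)) 0}
      ≤ P ({ω | ε / M ≤ dist (qtl (empCdf X n ω) p) c}
        ∪ {ω | M ≤ Real.sqrt n * |empCdf X n ω c - cdfOf μ c|}) := measure_mono hincl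
    _ ≤ P {ω | ε / M ≤ dist (qtl (empCdf X n ω) p) c}
        + P {ω | M ≤ Real.sqrt n * |empCdf X n ω c - cdfOf μ c|} := measure_union_le _ _
    _ ≤ η' / 2 + ENNReal.ofReal (1 / M ^ 2) :=
        add_le_add hn1 (empCdf_chebyshev P μ hmeas hindep hdist c hMpos hn2)
    _ ≤ η' / 2 + η' / 2 := by
        refine add_le_add le_rfl ?_
        calc ENNReal.ofReal (1 / M ^ 2) ≤ ENNReal.ofReal (r / 2) :=
              ENNReal.ofReal_le_ofReal hM2
          _ = η' / 2 := by
              rw [ENNReal.ofReal_div_of_pos (by norm_num : (0:ℝ) < 2),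
                ENNReal.ofReal_toReal hη'top]
              norm_num
    _ = η' := ENNReal.add_halves η'
    _ ≤ η := min_le_left _ _
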